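/- Let w be an invertible quasihomogeneous polynomial with exponent matrix A ∈ GLₙ(ℚ) (integer entries), and suppose the transposed polynomial wᵀ is quasihomogeneous with positive integer weights r₁,...,rₙ and degree dᵀ, so that rᵢ = dᵀ·Σ_{j=1}^{n}(A^{-1})_{ji}. For the interpolating polynomial built by replacing the last monomial with its x_{n+1}^{b}-modification, the minors satisfy d_{n+1} = det A and d_j = −b·det A·(A^{-1})_{jn} for 1 ≤ j ≤ n, and hence Σ_{j=1}^{n+1} d_j = det A · (1 − b·rₙ/dᵀ). In particular, if b = dᵀ/rₙ is an integer then Σ_j d_j = 0. -/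

import Mathlib

open Finset

/-- The augmented `n × (n+1)` exponent matrix (over `ℚ`) of the interpolating
polynomial `W`, obtained from the invertible exponent matrix `A` of `w` by
multiplying the `n`-th (last) monomial by `x_{n+1}^{b}`: the first `n` columns
are those of `A` and the last column is `b` times the last standard basis
vector. -/
noncomputable def augExpMatrix (n : ℕ) (hn : 1 ≤ n) (A : Matrix (Fin n) (Fin n) ℤ)
    (b : ℤ) : Matrix (Fin n) (Fin (n + 1)) ℚ :=
  Matrix.of fun i j =>
    if h : (j : ℕ) < n then ((A i ⟨(j : ℕ), h⟩ : ℤ) : ℚ)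
    else if i = (⟨n - 1, by omega⟩ : Fin n) then (b : ℚ) else 0

/-- The signed maximal minor `dᵢ` of the augmented matrix, deleting the
(zero-based) column `c`, with sign convention `det(minorᵢ) = (−1)^{i+n+1} dᵢ`
(1-based `i = c + 1`). -/
noncomputable def signedMinor (n : ℕ) (hn : 1 ≤ n) (A : Matrix (Fin n) (Fin n) ℤ)
    (b : ℤ) (c : Fin (n + 1)) : ℚ :=
  (-1 : ℚ) ^ ((c : ℕ) + n) * ((augExpMatrix n hn A b).submatrix id c.succAbove).det


open Matrix Equiv


/-- The permutation of `Fin (m+1)` fixing `k < j`, sending `j ↦ m` and `k ↦ k-1` for `k > j`. -/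
noncomputable def shiftPerm {m : ℕ} (j : Fin (m + 1)) : Equiv.Perm (Fin (m + 1)) :=
  Fin.revPerm.trans ((Fin.cycleRange j.rev).trans Fin.revPerm)

lemma shiftPerm_of_lt {m : ℕ} {j k : Fin (m + 1)} (h : k < j) : shiftPerm j k = k := by
  simp only [shiftPerm, Equiv.trans_apply, Fin.revPerm_apply]
  rw [Fin.cycleRange_of_gt (by rwa [Fin.rev_lt_rev]), Fin.rev_rev]

lemma shiftPerm_self {m : ℕ} (j : Fin (m + 1)) : shiftPerm j j = Fin.last m := by
  simp only [shiftPerm, Equiv.trans_apply, Fin.revPerm_apply]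
  rw [Fin.cycleRange_of_eq rfl]
  ext
  simp [Fin.val_rev]

lemma shiftPerm_of_gt {m : ℕ} {j k : Fin (m + 1)} (h : j < k) :
    shiftPerm j k = ⟨(k : ℕ) - 1, by omega⟩ := by
  simp only [shiftPerm, Equiv.trans_apply, Fin.revPerm_apply]
  rw [Fin.cycleRange_of_lt (by rwa [Fin.rev_lt_rev])]
  have hk : 1 ≤ (k : ℕ) := by omega
  have h1 : ((k.rev + 1 : Fin (m+1)) : ℕ) = (k.rev : ℕ) + 1 := by
    rw [Fin.val_add_one_of_lt]
    rw [Fin.lt_iff_val_lt_val, Fin.val_rev, Fin.val_last]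
    omega
  ext
  simp only [Fin.val_rev, h1]
  omega

lemma sign_shiftPerm {m : ℕ} (j : Fin (m + 1)) :
    Equiv.Perm.sign (shiftPerm j) = (-1) ^ (m - (j : ℕ)) := by
  have : shiftPerm j = Fin.revPerm * Fin.cycleRange j.rev * Fin.revPerm := rfl
  rw [this]
  simp only [_root_.map_mul, Fin.sign_cycleRange]
  have hval : ((j.rev : Fin (m+1)) : ℕ) = m - (j : ℕ) := by
    rw [Fin.val_rev]; omega
  rw [hval]
  have hsq : Equiv.Perm.sign (Fin.revPerm : Equiv.Perm (Fin (m+1))) *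
      Equiv.Perm.sign (Fin.revPerm : Equiv.Perm (Fin (m+1))) = 1 := Int.units_mul_self _
  calc Equiv.Perm.sign (Fin.revPerm : Equiv.Perm (Fin (m+1))) * (-1) ^ (m - (j:ℕ)) *
        Equiv.Perm.sign (Fin.revPerm : Equiv.Perm (Fin (m+1)))
      = (-1) ^ (m - (j:ℕ)) * (Equiv.Perm.sign (Fin.revPerm : Equiv.Perm (Fin (m+1))) *
        Equiv.Perm.sign (Fin.revPerm : Equiv.Perm (Fin (m+1)))) := by
        rw [mul_comm (Equiv.Perm.sign (Fin.revPerm : Equiv.Perm (Fin (m+1)))) ((-1) ^ (m - (j:ℕ))), mul_assoc]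
    _ = (-1) ^ (m - (j:ℕ)) := by rw [hsq, mul_one]

section main
variable {m : ℕ}

lemma part1 (hn : 1 ≤ m + 1) (A : Matrix (Fin (m+1)) (Fin (m+1)) ℤ) (b : ℤ) :
    signedMinor (m+1) hn A b (Fin.last (m+1)) = (A.map ((↑·) : ℤ → ℚ)).det := by
  have hM : (augExpMatrix (m+1) hn A b).submatrix id (Fin.last (m+1)).succAbove
      = A.map ((↑·) : ℤ → ℚ) := by
    ext i k
    simp [augExpMatrix, Fin.succAbove_last, Matrix.map_apply]
    intro h; exact absurd h (by have := k.isLt; omega)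
  rw [signedMinor, hM]
  have : ((Fin.last (m+1) : Fin (m+2)) : ℕ) + (m+1) = 2*(m+1) := by simp; ring
  rw [this]
  simp [pow_mul]

lemma part2 (hn : 1 ≤ m + 1) (A : Matrix (Fin (m+1)) (Fin (m+1)) ℤ)
    (hA : IsUnit ((A.map ((↑·) : ℤ → ℚ)).det)) (b : ℤ) (j : Fin (m+1)) :
    signedMinor (m+1) hn A b j.castSucc
      = -(b : ℚ) * (A.map ((↑·) : ℤ → ℚ)).det
          * (A.map ((↑·) : ℤ → ℚ))⁻¹ j (Fin.last m) := by
  set M := A.map ((↑·) : ℤ → ℚ) with hMdef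
  set B := (augExpMatrix (m+1) hn A b).submatrix id j.castSucc.succAbove with hBdef
  set U := M.updateCol j (Pi.single (Fin.last m) ((b : ℤ) : ℚ)) with hUdef
  have key : B.submatrix id (shiftPerm j) = U := by
    ext i k
    rcases lt_trichotomy k j with h | h | h
    · rw [Matrix.submatrix_apply, shiftPerm_of_lt h]
      have hs : j.castSucc.succAbove k = k.castSucc :=
        Fin.succAbove_of_castSucc_lt _ _ (by simpa using h)
      rw [hBdef, Matrix.submatrix_apply, hs, hUdef, Matrix.updateCol_apply, if_neg h.ne]
      simp [augExpMatrix, hMdef, Matrix.map_apply]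
      intro h; exact absurd h (by have := k.isLt; omega)
    · subst h
      rw [Matrix.submatrix_apply, shiftPerm_self]
      have hs : k.castSucc.succAbove (Fin.last m) = Fin.last (m+1) := by
        rw [Fin.succAbove_of_le_castSucc _ _ (by rw [Fin.le_def]; simp; omega)]
        rfl
      rw [hBdef, Matrix.submatrix_apply, hs, hUdef, Matrix.updateCol_apply, if_pos rfl]
      rw [Pi.single_apply]
      simp only [augExpMatrix, Matrix.of_apply, id_eq]
      rw [dif_neg (by simp)]
      have : (⟨m + 1 - 1, by omega⟩ : Fin (m+1)) = Fin.last m := rfl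
      rw [this]
    · rw [Matrix.submatrix_apply, shiftPerm_of_gt h]
      have hs : j.castSucc.succAbove ⟨(k : ℕ) - 1, by omega⟩ = ⟨(k : ℕ), by omega⟩ := by
        rw [Fin.succAbove_of_le_castSucc _ _ (by
          rw [Fin.le_def]; simp only [Fin.coe_castSucc]; omega)]
        ext; simp [Fin.val_succ]; omega
      rw [hBdef, Matrix.submatrix_apply, hs, hUdef, Matrix.updateCol_apply, if_neg h.ne']
      simp only [augExpMatrix, Matrix.of_apply, id_eq]
      rw [dif_pos (by omega)]
      simp [hMdef, Matrix.map_apply]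
  have hperm := Matrix.det_permute' (shiftPerm j) B
  rw [key] at hperm
  have hsign : ((Equiv.Perm.sign (shiftPerm j) : ℤˣ) : ℚ) = (-1 : ℚ) ^ (m - (j : ℕ)) := by
    rw [sign_shiftPerm]
    push_cast
    simp
  rw [hsign] at hperm
  have hBdet : B.det = (-1 : ℚ) ^ (m - (j : ℕ)) * U.det := by
    rw [hperm, ← mul_assoc, ← pow_add, Even.neg_one_pow ⟨m - (j:ℕ), by ring⟩, one_mul]
  have hUdet : U.det = (b : ℚ) * M.adjugate j (Fin.last m) := by
    have h1 : U.det = Matrix.cramer M (Pi.single (Fin.last m) ((b:ℤ):ℚ)) j :=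
      (Matrix.cramer_apply M _ j).symm
    have h2 : (Pi.single (Fin.last m) ((b:ℤ):ℚ) : Fin (m+1) → ℚ)
        = ((b:ℤ):ℚ) • (Pi.single (Fin.last m) (1:ℚ) : Fin (m+1) → ℚ) := by
      ext i
      simp [Pi.single_apply]
    have h3 : Matrix.cramer M (Pi.single (Fin.last m) (1:ℚ)) j = M.adjugate j (Fin.last m) := by
      rw [← Matrix.transpose_transpose M]
      rw [show (Mᵀᵀ).adjugate j (Fin.last m) = ((Mᵀ).adjugate)ᵀ j (Fin.last m) by
        rw [Matrix.adjugate_transpose]]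
      rw [Matrix.adjugate_def]
      simp
    rw [h1, h2, LinearMap.map_smul, Pi.smul_apply, smul_eq_mul, h3]
  have hadj : M.adjugate j (Fin.last m) = M.det * M⁻¹ j (Fin.last m) := by
    rw [Matrix.inv_def, Ring.inverse_eq_inv']
    have hd : M.det ≠ 0 := hA.ne_zero
    field_simp
    rw [Matrix.smul_apply, smul_eq_mul, ← mul_assoc, mul_one_div_cancel hd, one_mul]
  rw [signedMinor, hBdet, hUdet, hadj]
  have hj : (j.castSucc : ℕ) = (j : ℕ) := rfl
  rw [hj, ← mul_assoc, ← pow_add]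
  have hodd : Odd ((j : ℕ) + (m + 1) + (m - (j : ℕ))) := ⟨m, by omega⟩
  rw [hodd.neg_one_pow]
  ring

end main


/-- Cramer's rule computation for the minors of the interpolating polynomial:
`d_{n+1} = det A`, `d_j = −b · det A · (A⁻¹)_{jn}`, hence
`Σ_j d_j = det A · (1 − b rₙ / dᵀ)` where `rᵢ = dᵀ Σ_j (A⁻¹)_{ji}` are the
weights of `wᵀ`; in particular if `b · rₙ = dᵀ` then `Σ_j d_j = 0`. -/
theorem aug_minors_and_sum (n : ℕ) (hn : 1 ≤ n) (A : Matrix (Fin n) (Fin n) ℤ)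
    (hA : IsUnit ((A.map ((↑·) : ℤ → ℚ)).det)) (b : ℤ) (hb : 2 ≤ b)
    (dT : ℤ) (hdT : 0 < dT) (r : Fin n → ℤ) (hrpos : ∀ i, 0 < r i)
    (hr : ∀ i : Fin n, (r i : ℚ) = (dT : ℚ) * ∑ j : Fin n, (A.map ((↑·) : ℤ → ℚ))⁻¹ j i) :
    signedMinor n hn A b (Fin.last n) = (A.map ((↑·) : ℤ → ℚ)).det ∧
    (∀ j : Fin n, signedMinor n hn A b j.castSucc
        = -(b : ℚ) * (A.map ((↑·) : ℤ → ℚ)).det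
            * (A.map ((↑·) : ℤ → ℚ))⁻¹ j (⟨n - 1, by omega⟩ : Fin n)) ∧
    (∑ c : Fin (n + 1), signedMinor n hn A b c
        = (A.map ((↑·) : ℤ → ℚ)).det
            * (1 - (b : ℚ) * (r (⟨n - 1, by omega⟩ : Fin n) : ℚ) / (dT : ℚ))) ∧
    ((b : ℤ) * r (⟨n - 1, by omega⟩ : Fin n) = dT →
      ∑ c : Fin (n + 1), signedMinor n hn A b c = 0) := by
  obtain ⟨m, rfl⟩ : ∃ m, n = m + 1 := ⟨n - 1, by omega⟩
  set M := A.map ((↑·) : ℤ → ℚ) with hMdef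
  have h1 := part1 hn A b
  have h2 := part2 hn A hA b
  have hdT0 : (dT : ℚ) ≠ 0 := Int.cast_ne_zero.mpr (by omega)
  have hsuminv : ∑ j : Fin (m+1), M⁻¹ j (Fin.last m) = (r (Fin.last m) : ℚ) / (dT : ℚ) := by
    rw [hr (Fin.last m), mul_div_cancel_left₀ _ hdT0]
  have h3 : ∑ c : Fin (m + 2), signedMinor (m+1) hn A b c
      = M.det * (1 - (b : ℚ) * (r (Fin.last m) : ℚ) / (dT : ℚ)) := by
    rw [Fin.sum_univ_castSucc]
    simp only [h2, h1]
    have : ∑ j : Fin (m+1), (-(b:ℚ) * M.det * M⁻¹ j (Fin.last m))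
        = -(b:ℚ) * M.det * ((r (Fin.last m) : ℚ) / (dT : ℚ)) := by
      rw [← Finset.mul_sum, hsuminv]
    rw [this]
    ring
  refine ⟨h1, h2, h3, fun h => ?_⟩
  rw [h3]
  have hb' : (b : ℚ) * (r (Fin.last m) : ℚ) = (dT : ℚ) := by exact_mod_cast h
  rw [hb', div_self hdT0, sub_self, mul_zero]
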